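/- Let s, t be coprime integers greater than 1. If σ is an s-core partition, then the t-core of σ is also an s-core (Olsson's theorem). -/

import Mathlib

/-- A partition, given as a weakly decreasing finitely-supported sequence of
natural numbers (`parts 0` is the first part). -/
structure YPartition where
  parts : ℕ →₀ ℕ
  antitone : ∀ ⦃i j : ℕ⦄, i ≤ j → parts j ≤ parts i

namespace YPartition

/-- The size `|λ|` of a partition. -/
def size (l : YPartition) : ℕ := l.parts.sum fun _ v => v

/-- The beta-set `β(λ) = { λ_r − r : r ≥ 1 }` (here 0-indexed). -/
def betaSet (l : YPartition) : Set ℤ :=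
  Set.range fun r : ℕ => (l.parts r : ℤ) - (r + 1)

/-- `RemoveHook h l m` : `m` is obtained from `l` by removing a rim `h`-hook;
in beta-set terms, an element `b` of `β(l)` is replaced by `b − h ∉ β(l)`. -/
def RemoveHook (h : ℕ) (l m : YPartition) : Prop :=
  ∃ b : ℤ, b ∈ l.betaSet ∧ b - (h : ℤ) ∉ l.betaSet ∧
    m.betaSet = insert (b - (h : ℤ)) (l.betaSet \ {b})

/-- `l` is an `s`-core: no rim `s`-hook can be removed. -/
def IsCore (s : ℕ) (l : YPartition) : Prop := ∀ m : YPartition, ¬ RemoveHook s l m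

/-- `c` is the `s`-core of `l`: it is obtained from `l` by repeatedly removing
rim `s`-hooks, and is itself an `s`-core. -/
def HasCore (s : ℕ) (l c : YPartition) : Prop :=
  Relation.ReflTransGen (RemoveHook s) l c ∧ IsCore s c

/-- `IsConj l m` : `m` is the conjugate partition of `l`. -/
def IsConj (l m : YPartition) : Prop :=
  ∀ r : ℕ, m.parts r = Set.ncard {c : ℕ | r + 1 ≤ l.parts c}

end YPartition

/-- The region `U_x = { x + as + bt : a, b > 0 }`. -/
def UpSet (s t : ℕ) (x : ℤ) : Set ℤ :=
  {n : ℤ | ∃ a b : ℕ, 0 < a ∧ 0 < b ∧ n = x + (a : ℤ) * s + (b : ℤ) * t}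

/-- The region `L_x = { x − as − bt : a, b ≥ 0 }`. -/
def LowSet (s t : ℕ) (x : ℤ) : Set ℤ :=
  {n : ℤ | ∃ a b : ℕ, n = x - (a : ℤ) * s - (b : ℤ) * t}

/-- `x` is a pinch-point for `l` : `L_x ⊆ β(l)` and `β(l) ∩ U_x = ∅`. -/
def PinchPoint (s t : ℕ) (x : ℤ) (l : YPartition) : Prop :=
  LowSet s t x ⊆ l.betaSet ∧ l.betaSet ∩ UpSet s t x = ∅

/-- The generator `w_i` of the affine symmetric group `W_s` in its level-`t`
action on `ℤ` : `n ↦ n + t` if `n ≡ (i−1)t − (s−1)(t−1)/2 (mod s)`,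
`n ↦ n − t` if `n ≡ it − (s−1)(t−1)/2 (mod s)`, and `n ↦ n` otherwise. -/
def wgen (s t : ℕ) (i : ℤ) : ℤ → ℤ := fun n =>
  if (s : ℤ) ∣ (n + ((s : ℤ) - 1) * ((t : ℤ) - 1) / 2 - (i - 1) * t) then n + t
  else if (s : ℤ) ∣ (n + ((s : ℤ) - 1) * ((t : ℤ) - 1) / 2 - i * t) then n - t
  else n

/-- The monoid of maps `ℤ → ℤ` generated by the `wgen s t i`.  Since each
generator is an involution, this is the image of the level-`t` action
of the affine symmetric group `W_s` on `ℤ`. -/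
def WMon (s t : ℕ) : Submonoid (Function.End ℤ) :=
  Submonoid.closure {f | ∃ i : ℤ, f = wgen s t i}

/-- `l` is `(s,t)`-minimal: no partition of smaller size has the same
`s`-core and `t`-core. -/
def MinimalPart (s t : ℕ) (l : YPartition) : Prop :=
  ∀ (m σ τ : YPartition), YPartition.HasCore s l σ → YPartition.HasCore t l τ →
    YPartition.HasCore s m σ → YPartition.HasCore t m τ → l.size ≤ m.size

namespace OlssonAux
open YPartition

/-- The beta-sequence of a partition. -/
def g (l : YPartition) (r : ℕ) : ℤ := (l.parts r : ℤ) - (r + 1)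

lemma mem_betaSet_iff {l : YPartition} {n : ℤ} : n ∈ l.betaSet ↔ ∃ r, g l r = n :=
  Iff.rfl

lemma g_succ_lt (l : YPartition) (r : ℕ) : g l (r + 1) < g l r := by
  have := l.antitone (show r ≤ r + 1 from Nat.le_succ r)
  simp only [g, Nat.succ_eq_add_one] at this ⊢
  push_cast
  omega

lemma g_strictAnti (l : YPartition) : StrictAnti (g l) :=
  strictAnti_nat_of_succ_lt (g_succ_lt l)

lemma g_ge (l : YPartition) (r : ℕ) : -((r : ℤ) + 1) ≤ g l r := by
  have : (0 : ℤ) ≤ (l.parts r : ℤ) := Int.natCast_nonneg _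
  simp only [g]; omega

lemma g_le (l : YPartition) (r : ℕ) : g l r ≤ g l 0 - r := by
  induction r with
  | zero => simp
  | succ n ih => have := g_succ_lt l n; push_cast; push_cast at ih; omega

lemma exists_N (l : YPartition) : ∃ N : ℕ, ∀ r, N ≤ r → l.parts r = 0 := by
  refine ⟨l.parts.support.sup id + 1, fun r hr => ?_⟩
  by_contra h
  have hm : r ∈ l.parts.support := Finsupp.mem_support_iff.2 h
  have := Finset.le_sup (f := id) hm
  simp only [id] at this
  omega

lemma exists_M (l : YPartition) : ∃ M : ℤ, ∀ n < M, n ∈ l.betaSet := by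
  obtain ⟨N, hN⟩ := exists_N l
  refine ⟨-(N : ℤ), fun n hn => ?_⟩
  refine ⟨(-n - 1).toNat, ?_⟩
  have h1 : (N : ℤ) ≤ -n - 1 := by omega
  have h2 : ((-n - 1).toNat : ℤ) = -n - 1 := Int.toNat_of_nonneg (by omega)
  have h3 : N ≤ (-n - 1).toNat := by omega
  have := hN _ h3
  simp only [this]
  push_cast
  omega

lemma finite_above (l : YPartition) (x : ℤ) : (l.betaSet ∩ Set.Ici x).Finite := by
  have : l.betaSet ∩ Set.Ici x ⊆ g l '' Set.Iio (g l 0 - x + 1).toNat := by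
    rintro n ⟨⟨r, rfl⟩, hr⟩
    refine ⟨r, ?_, rfl⟩
    have h1 := g_le l r
    simp only [Set.mem_Iio]
    have : (r : ℤ) ≤ g l 0 - x := by
      have : x ≤ g l r := hr
      omega
    omega
  exact ((Set.finite_Iio _).image _).subset this

lemma finite_below_compl (l : YPartition) (x : ℤ) : (Set.Iio x \ l.betaSet).Finite := by
  obtain ⟨M, hM⟩ := exists_M l
  have : Set.Iio x \ l.betaSet ⊆ Set.Ico M x := by
    rintro n ⟨hn, hnb⟩
    refine ⟨?_, hn⟩
    by_contra h
    exact hnb (hM n (by omega))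
  exact (Set.finite_Ico M x).subset this

def ASet (t : ℕ) (x : ℤ) (l : YPartition) : Set ℤ :=
  {n | n ∈ l.betaSet ∧ ∃ k : ℕ, n = x + (k : ℤ) * t}

def CSet (t : ℕ) (x : ℤ) (l : YPartition) : Set ℤ :=
  {n | n ∉ l.betaSet ∧ ∃ k : ℕ, n = x - ((k : ℤ) + 1) * t}

lemma ASet_finite (t : ℕ) (x : ℤ) (l : YPartition) : (ASet t x l).Finite := by
  refine (finite_above l x).subset ?_
  rintro n ⟨hn, k, rfl⟩
  have h0 : (0:ℤ) ≤ (k:ℤ) * t := by positivity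
  exact ⟨hn, by simp only [Set.mem_Ici]; omega⟩

lemma CSet_finite (t : ℕ) (ht : 0 < t) (x : ℤ) (l : YPartition) : (CSet t x l).Finite := by
  refine (finite_below_compl l x).subset ?_
  rintro n ⟨hn, k, rfl⟩
  refine ⟨?_, hn⟩
  have h1 : (1:ℤ) ≤ t := by exact_mod_cast ht
  have h2 : ((k:ℤ) + 1) * t ≥ 1 := by nlinarith [Int.natCast_nonneg k]
  simp only [Set.mem_Iio]; omega

noncomputable def dd (t : ℕ) (x : ℤ) (l : YPartition) : ℤ :=
  ((ASet t x l).ncard : ℤ) - ((CSet t x l).ncard : ℤ)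

lemma closed_iter {l : YPartition} {h : ℕ} (hcl : ∀ b ∈ l.betaSet, b - (h:ℤ) ∈ l.betaSet)
    {b : ℤ} (hb : b ∈ l.betaSet) (k : ℕ) : b - (k : ℤ) * h ∈ l.betaSet := by
  induction k with
  | zero => simpa using hb
  | succ n ih =>
    have := hcl _ ih
    have e : b - ((n:ℤ)+1) * h = b - (n:ℤ) * h - h := by ring
    rw [show ((n+1 : ℕ) : ℤ) = (n:ℤ)+1 by push_cast; ring, e]
    exact this

lemma mem_iff_dd {l : YPartition} {t : ℕ} (ht : 0 < t)
    (hcl : ∀ b ∈ l.betaSet, b - (t:ℤ) ∈ l.betaSet) (x : ℤ) :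
    x ∈ l.betaSet ↔ 1 ≤ dd t x l := by
  constructor
  · intro hx
    have hC : CSet t x l = ∅ := by
      ext n
      simp only [CSet, Set.mem_setOf_eq, Set.mem_empty_iff_false, iff_false, not_and]
      intro hn
      rintro ⟨k, rfl⟩
      exact hn (by simpa using closed_iter hcl hx (k+1))
    have hA : (ASet t x l).Nonempty := ⟨x, hx, 0, by simp⟩
    have : 0 < (ASet t x l).ncard := (Set.ncard_pos (ASet_finite t x l)).2 hA
    simp only [dd, hC, Set.ncard_empty]
    omega
  · intro hd
    by_contra hx
    have hA : ASet t x l = ∅ := by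
      ext n
      simp only [ASet, Set.mem_setOf_eq, Set.mem_empty_iff_false, iff_false, not_and]
      intro hn
      rintro ⟨k, rfl⟩
      exact hx (by simpa using closed_iter hcl hn k)
    simp only [dd, hA, Set.ncard_empty] at hd
    omega

lemma dd_mono {l : YPartition} {s : ℕ} (t : ℕ)
    (hcl : ∀ b ∈ l.betaSet, b - (s:ℤ) ∈ l.betaSet) (x : ℤ) :
    dd t x l ≤ dd t (x - s) l := by
  have hA : (ASet t x l).ncard ≤ (ASet t (x - s) l).ncard := by
    refine Set.ncard_le_ncard_of_injOn (fun n => n - s) ?_ ?_ (ASet_finite _ _ _)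
    · rintro n ⟨hn, k, rfl⟩
      exact ⟨hcl _ hn, k, by ring⟩
    · intro a _ b _ h
      dsimp at h
      omega
  have hC : (CSet t (x - s) l).ncard ≤ (CSet t x l).ncard := by
    refine Set.ncard_le_ncard_of_injOn (fun n => n + s) ?_ ?_ ?_
    · rintro n ⟨hn, k, rfl⟩
      refine ⟨fun hns => hn ?_, k, by ring⟩
      have := hcl _ hns
      simpa using this
    · intro a _ b _ h
      dsimp at h
      omega
    · by_cases ht : 0 < t
      · exact CSet_finite t ht x l
      · interval_cases t
        · -- t = 0 : CSet has at most one element"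
          have : CSet 0 x l ⊆ {x - 0 - 1 * 0} ∪ {n | n = x} := by
            rintro n ⟨hn, k, rfl⟩
            right
            simp
          refine Set.Finite.subset ?_ this
          exact (Set.finite_singleton _).union (Set.finite_singleton _)
  simp only [dd]
  omega
end OlssonAux

namespace OlssonAux
open YPartition

lemma dd_step {t : ℕ} (ht : 0 < t) {l m : YPartition} (hr : RemoveHook t l m) (x : ℤ) :
    dd t x m = dd t x l := by
  obtain ⟨c, hc, hct, hβ⟩ := hr
  have ht1 : (1 : ℤ) ≤ (t : ℤ) := by exact_mod_cast ht
  by_cases hal : ∃ k : ℤ, c = x + k * t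
  · obtain ⟨k, hk⟩ := hal
    rcases lt_trichotomy k 0 with hkneg | rfl | hkpos
    · -- k ≤ -1 : bead moves strictly below x
      have key2 : ∀ k2 : ℕ, c < x + (k2 : ℤ) * t := by
        intro k2
        have h0 : (0:ℤ) ≤ (k2:ℤ) * t := by positivity
        have h1 : (k + 1) * (t:ℤ) ≤ 0 :=
          mul_nonpos_of_nonpos_of_nonneg (by omega) (by omega)
        have e : (k + 1) * (t:ℤ) = k * t + t := by ring
        linarith [hk]
      have hA : ASet t x m = ASet t x l := by
        ext n
        simp only [ASet, Set.mem_setOf_eq, hβ, Set.mem_insert_iff, Set.mem_diff,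
          Set.mem_singleton_iff]
        constructor
        · rintro ⟨h1, k2, rfl⟩
          have hlt := key2 k2
          rcases h1 with h1 | ⟨h1, h2⟩
          · exfalso; linarith
          · exact ⟨h1, k2, rfl⟩
        · rintro ⟨h1, k2, rfl⟩
          have hlt := key2 k2
          exact ⟨Or.inr ⟨h1, by intro he; rw [he] at hlt; linarith⟩, k2, rfl⟩
      have hcd : c = x - (((-k-1).toNat : ℤ) + 1) * t := by
        rw [Int.toNat_of_nonneg (by omega), hk]; ring
      have hctd : c - t = x - (((-k).toNat : ℤ) + 1) * t := by
        rw [Int.toNat_of_nonneg (by omega), hk]; ring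
      have hC : CSet t x m = insert c (CSet t x l \ {c - (t:ℤ)}) := by
        ext n
        simp only [CSet, Set.mem_setOf_eq, hβ, Set.mem_insert_iff, Set.mem_diff,
          Set.mem_singleton_iff]
        constructor
        · rintro ⟨h1, k2, rfl⟩
          push_neg at h1
          by_cases he : x - ((k2:ℤ)+1) * t = c
          · exact Or.inl he
          · exact Or.inr ⟨⟨fun hm => he (h1.2 hm), k2, rfl⟩, h1.1⟩
        · rintro (rfl | ⟨⟨h1, k2, rfl⟩, h2⟩)
          · refine ⟨?_, ⟨(-k-1).toNat, hcd⟩⟩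
            rintro (he | ⟨-, hne⟩)
            · omega
            · exact hne rfl
          · refine ⟨?_, k2, rfl⟩
            rintro (he | ⟨hm, -⟩)
            · exact h2 he
            · exact h1 hm
      have hnc : c ∉ CSet t x l \ {c - (t:ℤ)} := fun h => h.1.1 hc
      have hctC : c - (t:ℤ) ∈ CSet t x l := ⟨hct, (-k).toNat, hctd⟩
      have e1 : (CSet t x m).ncard = (CSet t x l).ncard := by
        rw [hC, Set.ncard_insert_of_notMem hnc ((CSet_finite t ht x l).diff)]
        exact Set.ncard_diff_singleton_add_one hctC (CSet_finite t ht x l)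
      simp only [dd, hA, e1]
    · -- k = 0 : c = x
      simp only [zero_mul, add_zero] at hk
      subst hk
      have hA : ASet t c m = ASet t c l \ {c} := by
        ext n
        simp only [ASet, Set.mem_setOf_eq, hβ, Set.mem_insert_iff, Set.mem_diff,
          Set.mem_singleton_iff]
        constructor
        · rintro ⟨h1, k2, rfl⟩
          have h0 : (0:ℤ) ≤ (k2:ℤ) * t := by positivity
          rcases h1 with h1 | ⟨h1, h2⟩
          · exfalso; linarith
          · exact ⟨⟨h1, k2, rfl⟩, h2⟩
        · rintro ⟨⟨h1, k2, rfl⟩, h2⟩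
          exact ⟨Or.inr ⟨h1, h2⟩, k2, rfl⟩
      have hcA : c ∈ ASet t c l := ⟨hc, 0, by push_cast; ring⟩
      have hAm : c ∉ ASet t c m := by rw [hA]; simp
      have e1 : (ASet t c l).ncard = (ASet t c m).ncard + 1 := by
        have hins : ASet t c l = insert c (ASet t c m) := by
          rw [hA, Set.insert_diff_singleton, Set.insert_eq_of_mem hcA]
        rw [hins, Set.ncard_insert_of_notMem hAm (ASet_finite t c m)]
      have hC : CSet t c m = CSet t c l \ {c - (t:ℤ)} := by
        ext n
        simp only [CSet, Set.mem_setOf_eq, hβ, Set.mem_insert_iff, Set.mem_diff,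
          Set.mem_singleton_iff]
        constructor
        · rintro ⟨h1, k2, rfl⟩
          push_neg at h1
          have hne : c - ((k2:ℤ)+1)*(t:ℤ) ≠ c := by
            have h5 : 1*(t:ℤ) ≤ ((k2:ℤ)+1)*(t:ℤ) :=
              mul_le_mul_of_nonneg_right (by omega) (by omega)
            intro he; linarith
          exact ⟨⟨fun hm => hne (h1.2 hm), k2, rfl⟩, h1.1⟩
        · rintro ⟨⟨h1, k2, rfl⟩, h2⟩
          refine ⟨?_, k2, rfl⟩
          rintro (he | ⟨hm, -⟩)
          · exact h2 he
          · exact h1 hm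
      have hctC : c - (t:ℤ) ∈ CSet t c l := ⟨hct, 0, by push_cast; ring⟩
      have hCm : c - (t:ℤ) ∉ CSet t c m := by rw [hC]; simp
      have e2 : (CSet t c l).ncard = (CSet t c m).ncard + 1 := by
        have hins : CSet t c l = insert (c - (t:ℤ)) (CSet t c m) := by
          rw [hC, Set.insert_diff_singleton, Set.insert_eq_of_mem hctC]
        rw [hins, Set.ncard_insert_of_notMem hCm (CSet_finite t ht c m)]
      simp only [dd]
      omega
    · -- 1 ≤ k : bead moves weakly above x
      have key : ∀ k2 : ℕ, x - ((k2:ℤ)+1) * (t:ℤ) < c - (t:ℤ) := by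
        intro k2
        have h0 : (0:ℤ) ≤ (k2:ℤ) := Int.natCast_nonneg k2
        have h5 : 1 * (t:ℤ) ≤ (k + (k2:ℤ)) * t := by
          apply mul_le_mul_of_nonneg_right (by omega) (by omega)
        have e : c - (t:ℤ) - (x - ((k2:ℤ)+1)*(t:ℤ)) = (k + (k2:ℤ)) * t := by
          rw [hk]; ring
        linarith
      have hcon : ASet t x m = insert (c - (t:ℤ)) (ASet t x l \ {c}) := by
        ext n
        simp only [ASet, Set.mem_setOf_eq, hβ, Set.mem_insert_iff, Set.mem_diff,
          Set.mem_singleton_iff]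
        constructor
        · rintro ⟨h1 | ⟨h1, h2⟩, hk2⟩
          · exact Or.inl h1
          · exact Or.inr ⟨⟨h1, hk2⟩, h2⟩
        · rintro (rfl | ⟨⟨h1, hk2⟩, h2⟩)
          · refine ⟨Or.inl rfl, (k-1).toNat, ?_⟩
            rw [Int.toNat_of_nonneg (by omega), hk]; ring
          · exact ⟨Or.inr ⟨h1, h2⟩, hk2⟩
      have hcA : c ∈ ASet t x l := ⟨hc, k.toNat, by rw [Int.toNat_of_nonneg (by omega)]; exact hk⟩
      have hctA : c - (t:ℤ) ∉ ASet t x l \ {c} := fun h => hct h.1.1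
      have e1 : (ASet t x m).ncard = (ASet t x l).ncard := by
        rw [hcon, Set.ncard_insert_of_notMem hctA ((ASet_finite t x l).diff)]
        exact Set.ncard_diff_singleton_add_one hcA (ASet_finite t x l)
      have hcC : CSet t x m = CSet t x l := by
        ext n
        simp only [CSet, Set.mem_setOf_eq, hβ, Set.mem_insert_iff, Set.mem_diff,
          Set.mem_singleton_iff]
        constructor
        · rintro ⟨h1, k2, rfl⟩
          have hlt := key k2
          refine ⟨fun hmem => h1 (Or.inr ⟨hmem, by intro he; rw [he] at hlt; linarith⟩), k2, rfl⟩
        · rintro ⟨h1, k2, rfl⟩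
          have hlt := key k2
          refine ⟨?_, k2, rfl⟩
          rintro (he | ⟨hmem, -⟩)
          · exact absurd he (ne_of_lt hlt)
          · exact h1 hmem
      simp only [dd, e1, hcC]
  · -- c not on the ray through x
    have hA : ASet t x m = ASet t x l := by
      ext n
      simp only [ASet, Set.mem_setOf_eq, hβ, Set.mem_insert_iff, Set.mem_diff,
        Set.mem_singleton_iff]
      constructor
      · rintro ⟨h1 | ⟨h1, h2⟩, k, rfl⟩
        · exact absurd ⟨(k:ℤ)+1, by linear_combination -h1⟩ hal
        · exact ⟨h1, k, rfl⟩
      · rintro ⟨h1, k, rfl⟩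
        refine ⟨Or.inr ⟨h1, fun he => hal ⟨(k:ℤ), he.symm⟩⟩, k, rfl⟩
    have hC : CSet t x m = CSet t x l := by
      ext n
      simp only [CSet, Set.mem_setOf_eq, hβ, Set.mem_insert_iff, Set.mem_diff,
        Set.mem_singleton_iff]
      constructor
      · rintro ⟨h1, k, rfl⟩
        push_neg at h1
        refine ⟨fun hm => ?_, k, rfl⟩
        have := h1.2 hm
        exact hal ⟨-((k:ℤ)+1), by rw [← this]; ring⟩
      · rintro ⟨h1, k, rfl⟩
        refine ⟨?_, k, rfl⟩
        rintro (he | ⟨hm, -⟩)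
        · exact hal ⟨-(k:ℤ), by linear_combination -he⟩
        · exact h1 hm
    simp only [dd, hA, hC]

end OlssonAux

namespace OlssonAux
open YPartition

theorem realize (l : YPartition) (h : ℕ) (hh : 0 < h) (b : ℤ)
    (hb : b ∈ l.betaSet) (hbh : b - (h:ℤ) ∉ l.betaSet) :
    ∃ m : YPartition, m.betaSet = insert (b - (h:ℤ)) (l.betaSet \ {b}) := by
  obtain ⟨r0, hr0⟩ := mem_betaSet_iff.1 hb
  have hne : ∀ r, g l r ≠ b - (h:ℤ) := by
    intro r he
    exact hbh (mem_betaSet_iff.2 ⟨r, he⟩)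
  have hh1 : (1:ℤ) ≤ (h:ℤ) := by exact_mod_cast hh
  -- find r1 : the last index where g exceeds b - h
  have hex : ∃ r : ℕ, g l (r+1) < b - (h:ℤ) := by
    refine ⟨(g l 0 - (b - (h:ℤ))).toNat, ?_⟩
    have h1 := g_le l ((g l 0 - (b - (h:ℤ))).toNat + 1)
    have h2 : (g l 0 - (b - (h:ℤ))) ≤ ((g l 0 - (b - (h:ℤ))).toNat : ℤ) := Int.self_le_toNat _
    push_cast at h1
    omega
  set r1 := Nat.find hex with hr1def
  have K2 : g l (r1 + 1) < b - (h:ℤ) := Nat.find_spec hex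
  have K1 : ∀ r, r ≤ r1 → b - (h:ℤ) < g l r := by
    intro r hr
    match r with
    | 0 =>
      have h1 : g l r0 ≤ g l 0 := (g_strictAnti l).antitone (Nat.zero_le r0)
      omega
    | (r'+1) =>
      have h1 : ¬ g l (r'+1) < b - (h:ℤ) := Nat.find_min hex (by omega)
      have h2 := hne (r'+1)
      omega
  have K3 : r0 ≤ r1 := by
    by_contra hcon
    have h1 : g l r0 ≤ g l (r1+1)  := by
      exact (g_strictAnti l).antitone (by omega)
    omega
  have pos_mid : ∀ r : ℕ, 0 < r → r ≤ r1 → 0 < l.parts r := by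
    intro r hr hle
    by_contra hz
    have hz0 : l.parts r = 0 := by omega
    have hall : ∀ m, r ≤ m → l.parts m = 0 := by
      intro m hm
      have := l.antitone hm
      omega
    have hg : g l r = -(r:ℤ) - 1 := by simp [g, hz0]; ring
    have hbr : b - (h:ℤ) < -(r:ℤ) - 1 := by have := K1 r hle; omega
    set m := (-(b - (h:ℤ)) - 1).toNat with hm
    have hmz : (m : ℤ) = -(b - (h:ℤ)) - 1 := Int.toNat_of_nonneg (by omega)
    have hmr : r ≤ m := by omega
    have : g l m = b - (h:ℤ) := by
      simp [g, hall m hmr]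
      omega
    exact hne m this
  have nn1 : 0 ≤ b - (h:ℤ) + r1 + 1 := by
    have := g_ge l (r1+1)
    push_cast at this
    omega
  -- the new parts function
  set pf : ℕ → ℕ := fun r =>
    if r < r0 then l.parts r
    else if r < r1 then l.parts (r+1) - 1
    else if r = r1 then (b - (h:ℤ) + r1 + 1).toNat
    else l.parts r with hpf
  have hgf : ∀ r : ℕ, (pf r : ℤ) - (r + 1) =
      if r < r0 then g l r
      else if r < r1 then g l (r+1)
      else if r = r1 then b - (h:ℤ)
      else g l r := by
    intro r
    simp only [hpf]
    split_ifs with h1 h2 h3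
    · simp [g]
    · have hp : 0 < l.parts (r+1) := pos_mid (r+1) (by omega) (by omega)
      have : ((l.parts (r+1) - 1 : ℕ) : ℤ) = (l.parts (r+1) : ℤ) - 1 := by
        push_cast [hp]
        omega
      rw [this]
      simp [g]
      push_cast
      ring
    · subst h3
      rw [Int.toNat_of_nonneg nn1]
      ring
    · simp [g]
  -- monotonicity of pf, expressed via the g-values
  have hmono : ∀ r : ℕ, (pf (r+1) : ℤ) - (r + 2) < (pf r : ℤ) - (r+1) := by
    intro r
    have e1 := hgf r
    have e2 := hgf (r+1)
    have e2' : (pf (r+1) : ℤ) - (r+2) = (pf (r+1) : ℤ) - ((r+1 : ℕ) + 1) := by push_cast; ring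
    rw [e2'] at *
    rcases (show r + 1 < r0 ∨ (r + 1 = r0 ∧ r0 < r1) ∨ (r + 1 = r0 ∧ r0 = r1) ∨
        (r0 ≤ r ∧ r + 1 < r1) ∨ (r0 ≤ r ∧ r + 1 = r1) ∨ r = r1 ∨ r1 < r by omega) with
      h1 | ⟨h1, h2⟩ | ⟨h1, h2⟩ | ⟨h1, h2⟩ | ⟨h1, h2⟩ | h1 | h1
    · rw [if_pos (by omega)] at e1
      rw [if_pos (by omega)] at e2
      rw [e1, e2]
      exact g_succ_lt l r
    · rw [if_pos (by omega)] at e1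
      rw [if_neg (by omega), if_pos (by omega)] at e2
      rw [e1, e2]
      exact (g_strictAnti l) (by omega)
    · rw [if_pos (by omega)] at e1
      rw [if_neg (by omega), if_neg (by omega), if_pos (by omega)] at e2
      rw [e1, e2]
      have := K1 r (by omega)
      omega
    · rw [if_neg (by omega), if_pos (by omega)] at e1
      rw [if_neg (by omega), if_pos (by omega)] at e2
      rw [e1, e2]
      exact (g_strictAnti l) (by omega)
    · rw [if_neg (by omega), if_pos (by omega)] at e1
      rw [if_neg (by omega), if_neg (by omega), if_pos (by omega)] at e2
      rw [e1, e2]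
      have := K1 (r+1) (by omega)
      have h3 : g l (r+1) = g l r1 := by rw [h2]
      omega
    · subst h1
      rw [if_neg (by omega), if_neg (by omega), if_pos rfl] at e1
      rw [if_neg (by omega), if_neg (by omega), if_neg (by omega)] at e2
      rw [e1, e2]
      exact K2
    · rw [if_neg (by omega), if_neg (by omega), if_neg (by omega)] at e1
      rw [if_neg (by omega), if_neg (by omega), if_neg (by omega)] at e2
      rw [e1, e2]
      exact g_succ_lt l r
  have hpf_succ : ∀ r : ℕ, pf (r+1) ≤ pf r := by
    intro r
    have := hmono r
    omega
  have hpf_anti : ∀ ⦃i j : ℕ⦄, i ≤ j → pf j ≤ pf i := fun i j hij =>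
    antitone_nat_of_succ_le hpf_succ hij
  -- finite support
  obtain ⟨N, hN⟩ := exists_N l
  have hsupp : (Function.support pf).Finite := by
    refine (Set.finite_Iio (max N (r1+1))).subset ?_
    intro r hr
    simp only [Function.mem_support] at hr
    simp only [Set.mem_Iio]
    by_contra hge
    push_neg at hge
    have h1 : ¬ r < r0 := by omega
    have h2 : ¬ r < r1 := by omega
    have h3 : r ≠ r1 := by omega
    have : pf r = l.parts r := by simp only [hpf, if_neg h1, if_neg h2, if_neg h3]
    rw [this] at hr
    exact hr (hN r (by omega))
  have hanti : ∀ ⦃i j : ℕ⦄, i ≤ j →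
      (Finsupp.ofSupportFinite pf hsupp) j ≤ (Finsupp.ofSupportFinite pf hsupp) i := by
    intro i j hij
    have hc : ((Finsupp.ofSupportFinite pf hsupp) : ℕ → ℕ) = pf := Finsupp.ofSupportFinite_coe
    simp only [hc]
    exact hpf_anti hij
  set P : YPartition := ⟨Finsupp.ofSupportFinite pf hsupp, hanti⟩ with hP
  have hPparts : ∀ r, P.parts r = pf r := by
    intro r
    simp only [hP]
    exact congrFun (Finsupp.ofSupportFinite_coe) r
  have hgf' : ∀ r : ℕ, g P r =
      if r < r0 then g l r
      else if r < r1 then g l (r+1)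
      else if r = r1 then b - (h:ℤ)
      else g l r := by
    intro r
    have : g P r = (pf r : ℤ) - (r+1) := by simp [g, hPparts r]
    rw [this, hgf r]
  have hinj := (g_strictAnti l).injective
  refine ⟨P, ?_⟩
  ext n
  simp only [Set.mem_insert_iff, Set.mem_diff, Set.mem_singleton_iff]
  constructor
  · intro hn
    obtain ⟨r, hr⟩ := mem_betaSet_iff.1 hn
    rw [hgf' r] at hr
    split_ifs at hr with h1 h2 h3
    · refine Or.inr ⟨mem_betaSet_iff.2 ⟨r, hr⟩, ?_⟩
      rw [← hr]
      intro he
      have : r = r0 := hinj (he.trans hr0.symm)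
      omega
    · refine Or.inr ⟨mem_betaSet_iff.2 ⟨r+1, hr⟩, ?_⟩
      rw [← hr]
      intro he
      have : r + 1 = r0 := hinj (he.trans hr0.symm)
      omega
    · exact Or.inl hr.symm
    · refine Or.inr ⟨mem_betaSet_iff.2 ⟨r, hr⟩, ?_⟩
      rw [← hr]
      intro he
      have : r = r0 := hinj (he.trans hr0.symm)
      omega
  · rintro (rfl | ⟨hn, hne2⟩)
    · refine mem_betaSet_iff.2 ⟨r1, ?_⟩
      rw [hgf' r1, if_neg (by omega), if_neg (by omega), if_pos rfl]
    · obtain ⟨r, hr⟩ := mem_betaSet_iff.1 hn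
      have hrne : r ≠ r0 := by
        intro he
        subst he
        exact hne2 (hr.symm.trans hr0)
      rcases (show r < r0 ∨ (r0 < r ∧ r ≤ r1) ∨ r1 < r by omega) with h1 | ⟨h1, h2⟩ | h1
      · exact mem_betaSet_iff.2 ⟨r, by rw [hgf' r, if_pos h1]; exact hr⟩
      · refine mem_betaSet_iff.2 ⟨r - 1, ?_⟩
        rw [hgf' (r-1), if_neg (by omega), if_pos (by omega),
          show r - 1 + 1 = r by omega]
        exact hr
      · exact mem_betaSet_iff.2 ⟨r, by
          rw [hgf' r, if_neg (by omega), if_neg (by omega), if_neg (by omega)]; exact hr⟩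

end OlssonAux

namespace OlssonAux
open YPartition

lemma closed_of_isCore {l : YPartition} {h : ℕ} (hh : 0 < h) (hc : IsCore h l) :
    ∀ b ∈ l.betaSet, b - (h:ℤ) ∈ l.betaSet := by
  intro b hb
  by_contra hn
  obtain ⟨m, hm⟩ := realize l h hh b hb hn
  exact hc m ⟨b, hb, hn, hm⟩

lemma dd_rtg {t : ℕ} (ht : 0 < t) {l m : YPartition}
    (hr : Relation.ReflTransGen (RemoveHook t) l m) (x : ℤ) :
    dd t x m = dd t x l := by
  induction hr with
  | refl => rfl
  | tail _ hstep ih => rw [dd_step ht hstep x, ih]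

end OlssonAux


/-- Olsson's theorem: the `t`-core of an `s`-core is an `s`-core. -/
theorem stmt6 (s t : ℕ) (hs : 1 < s) (ht : 1 < t) (hst : Nat.Coprime s t)
    (σ τ : YPartition) (hσ : YPartition.IsCore s σ)
    (hτ : YPartition.HasCore t σ τ) :
    YPartition.IsCore s τ := by
  obtain ⟨hrel, hτcore⟩ := hτ
  have hs0 : 0 < s := by omega
  have ht0 : 0 < t := by omega
  have hσs := OlssonAux.closed_of_isCore hs0 hσ
  have hτt := OlssonAux.closed_of_isCore ht0 hτcore
  have hclosed : ∀ b ∈ τ.betaSet, b - (s:ℤ) ∈ τ.betaSet := by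
    intro b hb
    have h1 : 1 ≤ OlssonAux.dd t b τ := (OlssonAux.mem_iff_dd ht0 hτt b).1 hb
    rw [OlssonAux.dd_rtg ht0 hrel b] at h1
    have h2 : OlssonAux.dd t b σ ≤ OlssonAux.dd t (b - (s:ℤ)) σ :=
      OlssonAux.dd_mono t hσs b
    have h3 : 1 ≤ OlssonAux.dd t (b - (s:ℤ)) τ := by
      rw [OlssonAux.dd_rtg ht0 hrel (b - (s:ℤ))]
      omega
    exact (OlssonAux.mem_iff_dd ht0 hτt (b - (s:ℤ))).2 h3
  rintro m ⟨b, hb, hbs, -⟩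
  exact hbs (hclosed b hb)
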